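/- Let S, A, T, 𝒫 be as in the MDP context, I a finite index set, and for each i ∈ I let V_i : S × 𝒫 → ℝ be mixture-affine and satisfy the generalized Bellman form with reward R_i and discount γ_i. Let γ_Σ : S × A → ℝ with γ_Σ(s,a) > 0 for all (s,a), and let initial weights w_i ∈ ℝ be given. Define weights on histories (finite lists of state–action pairs) by w_i([]) := w_i and w_i(h ++ [(s,a)]) := w_i(h)·γ_i(s,a)/γ_Σ(s,a), and define V_Σ(h, s, Π) := Σ_{i∈I} w_i(h)·V_i(s, Π). Then: (a) for all h, s, a, Π: V_Σ(h, s, a·Π) = Σ_{i∈I} w_i(h)·R_i(s,a) + γ_Σ(s,a)·E_{s'~T(s,a)}[V_Σ(h ++ [(s,a)], s', Π)], i.e., V_Σ satisfies a generalized Bellman recursion on the history-augmented state space with discount γ_Σ and reward R_Σ(h,s,a) := Σ_{i∈I} w_i(h)·R_i(s,a); (b) consequently V_Σ is dynamically consistent: V_Σ(h, s, a·Π) > V_Σ(h, s, a·Ω) if and only if E_{s'~T(s,a)}[V_Σ(h ++ [(s,a)], s', Π)] > E_{s'~T(s,a)}[V_Σ(h ++ [(s,a)], s', Ω)]; and (c)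 V_Σ is Pareto indifferent at every history: if V_i(s, Π) = V_i(s, Ω) for all i ∈ I then V_Σ(h, s, Π) = V_Σ(h, s, Ω). -/

import Mathlib

open scoped BigOperators

/-- The one-step expected value `V̄(s,a,π) = E_{s' ~ T(s,a)}[V(s',π)]`. -/
noncomputable def Vbar {S A P : Type*} [Fintype S]
    (T : S → A → S → ℝ) (V : S → P → ℝ) (s : S) (a : A) (π : P) : ℝ :=
  ∑ s', T s a s' * V s' π

/-- `V` is mixture-affine with respect to the policy-mixing operation `mix`. -/
def MixAffine {S P : Type*} (mix : ℝ → P → P → P) (V : S → P → ℝ) : Prop :=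
  ∀ (s : S) (β : ℝ), 0 ≤ β → β ≤ 1 → ∀ π ω : P,
    V s (mix β π ω) = β * V s π + (1 - β) * V s ω

/-- `V` satisfies the generalized Bellman form with reward `R` and discount `γ`. -/
def BellmanForm {S A P : Type*} [Fintype S] (T : S → A → S → ℝ) (act : A → P → P)
    (V : S → P → ℝ) (R : S → A → ℝ) (γ : S → A → ℝ) : Prop :=
  ∀ (s : S) (a : A) (π : P), V s (act a π) = R s a + γ s a * Vbar T V s a π

/-- The conflict condition for `(V1, V2)` at `(s, a)`: there are policies `π, ω, l`
on which the one-step expected values of `V1` and `V2` are oppositely ordered, with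
non-symmetric crossing points `β1 ≠ β2`. -/
def Conflict {S A P : Type*} [Fintype S]
    (T : S → A → S → ℝ) (V1 V2 : S → P → ℝ) (s : S) (a : A) : Prop :=
  ∃ π ω l : P,
    Vbar T V1 s a π > Vbar T V1 s a l ∧ Vbar T V1 s a l > Vbar T V1 s a ω ∧
    Vbar T V2 s a ω > Vbar T V2 s a l ∧ Vbar T V2 s a l > Vbar T V2 s a π ∧
    (Vbar T V1 s a l - Vbar T V1 s a ω) / (Vbar T V1 s a π - Vbar T V1 s a ω) ≠
      (Vbar T V2 s a l - Vbar T V2 s a ω) / (Vbar T V2 s a π - Vbar T V2 s a ω)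

/-- History-dependent aggregation weight: `w_i([]) = w_i` and
`w_i(h ++ [(s,a)]) = w_i(h)·γ_i(s,a)/γagg(s,a)`. -/
noncomputable def histWeight {S A I : Type*}
    (γ : I → S → A → ℝ) (γagg : S → A → ℝ) (w0 : I → ℝ)
    (i : I) (h : List (S × A)) : ℝ :=
  w0 i * (h.map (fun p => γ i p.1 p.2 / γagg p.1 p.2)).prod

/-- History-augmented aggregate value `Vagg(h, s, π) := Σ_i w_i(h)·V_i(s, π)`. -/
noncomputable def aggValue {S A P I : Type*} [Fintype I]
    (γ : I → S → A → ℝ) (γagg : S → A → ℝ) (w0 : I → ℝ)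
    (V : I → S → P → ℝ) (h : List (S × A)) (s : S) (π : P) : ℝ :=
  ∑ i, histWeight γ γagg w0 i h * V i s π

/-- **Possibility of non-Markovian aggregation (Theorem 5).** With history-discounted
weights `w_i(h ++ [(s,a)]) = w_i(h)·γ_i(s,a)/γagg(s,a)`, the aggregate
`Vagg(h,s,π) = Σ_i w_i(h)·V_i(s,π)` (a) satisfies a generalized Bellman recursion on the
history-augmented state space with discount `γagg` and reward `Σ_i w_i(h)·R_i(s,a)`,
(b) is dynamically consistent, and (c) is Pareto indifferent at every history. -/
theorem possibility_of_nonmarkovian_aggregation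
    {S A P I : Type*} [Fintype S] [Nonempty S] [Fintype A] [Nonempty A] [Fintype I]
    (T : S → A → S → ℝ)
    (hT0 : ∀ s a s', 0 ≤ T s a s') (hT1 : ∀ s a, ∑ s', T s a s' = 1)
    (act : A → P → P) (mix : ℝ → P → P → P)
    (hact_mix : ∀ (a : A) (β : ℝ) (π ω : P), act a (mix β π ω) = mix β (act a π) (act a ω))
    (V : I → S → P → ℝ) (haff : ∀ i, MixAffine mix (V i))
    (R : I → S → A → ℝ) (γ : I → S → A → ℝ)
    (hB : ∀ i, BellmanForm T act (V i) (R i) (γ i))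
    (γagg : S → A → ℝ) (hγaggpos : ∀ s a, 0 < γagg s a)
    (w0 : I → ℝ) :
    -- (a) generalized Bellman recursion on the history-augmented state space
    (∀ (h : List (S × A)) (s : S) (a : A) (π : P),
        aggValue γ γagg w0 V h s (act a π) =
          (∑ i, histWeight γ γagg w0 i h * R i s a) +
            γagg s a *
              ∑ s', T s a s' * aggValue γ γagg w0 V (h ++ [(s, a)]) s' π) ∧
    -- (b) dynamic consistency
    (∀ (h : List (S × A)) (s : S) (a : A) (π ω : P),
        aggValue γ γagg w0 V h s (act a π) > aggValue γ γagg w0 V h s (act a ω) ↔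
          (∑ s', T s a s' * aggValue γ γagg w0 V (h ++ [(s, a)]) s' π) >
            (∑ s', T s a s' * aggValue γ γagg w0 V (h ++ [(s, a)]) s' ω)) ∧
    -- (c) Pareto indifference at every history
    (∀ (h : List (S × A)) (s : S) (π ω : P),
        (∀ i, V i s π = V i s ω) →
          aggValue γ γagg w0 V h s π = aggValue γ γagg w0 V h s ω) := by
  have key : ∀ (h : List (S × A)) (s : S) (a : A) (π : P),
      aggValue γ γagg w0 V h s (act a π) =
        (∑ i, histWeight γ γagg w0 i h * R i s a) +
          γagg s a *
            ∑ s', T s a s' * aggValue γ γagg w0 V (h ++ [(s, a)]) s' π := by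
    intro h s a π
    have hγ := (hγaggpos s a).ne'
    have hw : ∀ i, histWeight γ γagg w0 i (h ++ [(s, a)]) =
        histWeight γ γagg w0 i h * (γ i s a / γagg s a) := by
      intro i
      simp [histWeight, mul_assoc]
    calc aggValue γ γagg w0 V h s (act a π)
        = ∑ i, histWeight γ γagg w0 i h * (R i s a + γ i s a * Vbar T (V i) s a π) := by
          simp [aggValue, hB _ s a π]
      _ = (∑ i, histWeight γ γagg w0 i h * R i s a) +
            ∑ i, histWeight γ γagg w0 i h * (γ i s a * Vbar T (V i) s a π) := by
          rw [← Finset.sum_add_distrib]; congr 1; ext i; ring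
      _ = _ := by
          congr 1
          rw [Finset.mul_sum]
          have : ∀ s', γagg s a * (T s a s' * aggValue γ γagg w0 V (h ++ [(s, a)]) s' π)
              = ∑ i, histWeight γ γagg w0 i h * (γ i s a * (T s a s' * V i s' π)) := by
            intro s'
            rw [aggValue, Finset.mul_sum, Finset.mul_sum]
            congr 1; ext i
            rw [hw i]
            field_simp
          rw [Finset.sum_congr rfl fun s' _ => this s']
          rw [Finset.sum_comm]
          congr 1; ext i
          simp [Vbar, Finset.mul_sum]
  refine ⟨key, ?_, ?_⟩
  · intro h s a π ω
    rw [key, key]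
    constructor
    · intro hlt
      have := sub_pos.mpr hlt
      have h2 : 0 < γagg s a * ((∑ s', T s a s' * aggValue γ γagg w0 V (h ++ [(s, a)]) s' π)
          - ∑ s', T s a s' * aggValue γ γagg w0 V (h ++ [(s, a)]) s' ω) := by
        rw [mul_sub]; linarith
      nlinarith [hγaggpos s a]
    · intro hlt
      have := hγaggpos s a
      nlinarith
  · intro h s π ω heq
    simp [aggValue, heq]
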